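/- Let Φ : A₁ → A₂ be a Schwarz map with Schwarz constant s = ‖Φ‖_S, and let M_Φ := {X : Φ(X)Φ(X*) = s·Φ(XX*)}. Then X ∈ M_Φ if and only if Φ(X)Φ(Z) = s·Φ(XZ) for all Z ∈ A₁; in particular M_Φ is a vector subspace closed under multiplication. -/

import Mathlib

open Matrix ComplexOrder

private lemma qzero' {k : ℕ} (M : Matrix (Fin k) (Fin k) ℂ)
    (h : ∀ x : Fin k → ℂ, star x ⬝ᵥ (M *ᵥ x) = 0) : M = 0 := by
  have : Matrix.toEuclideanLin M = 0 := by
    rw [← inner_map_self_eq_zero]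
    intro x
    have hx := h x
    simp only [Matrix.toEuclideanLin_apply]
    rw [EuclideanSpace.inner_eq_star_dotProduct, dotProduct_comm]
    show star (M *ᵥ (x : Fin k → ℂ)) ⬝ᵥ (x : Fin k → ℂ) = 0
    have : star (M *ᵥ (x : Fin k → ℂ)) ⬝ᵥ (x : Fin k → ℂ)
        = star (star (x : Fin k → ℂ) ⬝ᵥ (M *ᵥ (x : Fin k → ℂ))) := by
      simp [dotProduct, Finset.sum_comm, mul_comm]
    rw [this, hx, star_zero]
  simpa using congrArg Matrix.toEuclideanLin.symm this

private lemma qconj {k : ℕ} (M : Matrix (Fin k) (Fin k) ℂ) (x : Fin k → ℂ) :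
    star x ⬝ᵥ (Mᴴ *ᵥ x) = star (star x ⬝ᵥ (M *ᵥ x)) := by
  simp only [dotProduct, mulVec, conjTranspose_apply, star_sum, star_mul', star_star,
    Finset.mul_sum, Finset.sum_mul, Pi.star_apply]
  rw [Finset.sum_comm]
  congr 1; funext i; congr 1; funext j; ring


section
variable {m k : ℕ} (Φ : Matrix (Fin m) (Fin m) ℂ →ₗ[ℂ] Matrix (Fin k) (Fin k) ℂ) {s : ℝ}

private lemma smulPSD' {n : ℕ} {c : ℝ} (hc : 0 ≤ c) {M : Matrix (Fin n) (Fin n) ℂ}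
    (hM : M.PosSemidef) : (c • M).PosSemidef := by
  refine PosSemidef.of_dotProduct_mulVec_nonneg ?_ ?_
  · show (c • M)ᴴ = c • M
    rw [conjTranspose_smul, star_trivial, hM.1.eq]
  · intro x
    have h2 := hM.dotProduct_mulVec_nonneg x
    have : star x ⬝ᵥ ((c • M) *ᵥ x) = c • (star x ⬝ᵥ (M *ᵥ x)) := by
      simp [smul_mulVec, dotProduct_smul]
    rw [this]
    have h0 : (0:ℂ) ≤ (c:ℂ) := by exact_mod_cast hc
    calc (0:ℂ) = (c:ℂ) * 0 := by ring
    _ ≤ (c:ℂ) * (star x ⬝ᵥ (M *ᵥ x)) := mul_le_mul_of_nonneg_left h2 h0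
    _ = c • (star x ⬝ᵥ (M *ᵥ x)) := by rw [Complex.real_smul]

private lemma psd_map (hB : ∀ X, (s • Φ (Xᴴ * X) - (Φ X)ᴴ * Φ X).PosSemidef)
    (hs : 0 < s) {P : Matrix (Fin m) (Fin m) ℂ} (hP : P.PosSemidef) :
    (Φ P).PosSemidef := by
  obtain ⟨B, hC⟩ : ∃ B : Matrix (Fin m) (Fin m) ℂ, Bᴴ * B = P := by
    open scoped MatrixOrder in
    exact ⟨CFC.sqrt P, by
      rw [← Matrix.star_eq_conjTranspose, (CFC.sqrt_nonneg P).isSelfAdjoint.star_eq,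
        CFC.sqrt_mul_sqrt_self P hP.nonneg]⟩
  have h3 : (s • Φ P).PosSemidef := by
    have := (hB B).add (posSemidef_conjTranspose_mul_self (Φ B))
    simpa [hC] using this
  have := smulPSD' (c := s⁻¹) (by positivity) h3
  simpa [smul_smul, inv_mul_cancel₀ hs.ne'] using this

private lemma herm_map (hB : ∀ X, (s • Φ (Xᴴ * X) - (Φ X)ᴴ * Φ X).PosSemidef)
    (hs : 0 < s) {H : Matrix (Fin m) (Fin m) ℂ} (hH : H.IsHermitian) :
    (Φ H).IsHermitian := by
  set U : Matrix (Fin m) (Fin m) ℂ := (hH.eigenvectorUnitary : Matrix (Fin m) (Fin m) ℂ) with hU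
  set P : Matrix (Fin m) (Fin m) ℂ :=
    U * diagonal (fun i => ((max (hH.eigenvalues i) 0 : ℝ) : ℂ)) * Uᴴ with hPdef
  set Q : Matrix (Fin m) (Fin m) ℂ :=
    U * diagonal (fun i => ((max (-hH.eigenvalues i) 0 : ℝ) : ℂ)) * Uᴴ with hQdef
  have hP : P.PosSemidef := by
    refine PosSemidef.mul_mul_conjTranspose_same ?_ U
    refine posSemidef_diagonal_iff.mpr fun i => ?_
    exact_mod_cast le_max_right _ _
  have hQ : Q.PosSemidef := by
    refine PosSemidef.mul_mul_conjTranspose_same ?_ U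
    refine posSemidef_diagonal_iff.mpr fun i => ?_
    exact_mod_cast le_max_right _ _
  have hd : (diagonal fun i => ((hH.eigenvalues i ⊔ 0 : ℝ) : ℂ))
      - (diagonal fun i => ((-hH.eigenvalues i ⊔ 0 : ℝ) : ℂ))
      = diagonal (RCLike.ofReal ∘ hH.eigenvalues) := by
    rw [diagonal_sub]
    refine congrArg diagonal (funext fun i => ?_)
    show ((hH.eigenvalues i ⊔ 0 : ℝ) : ℂ) - ((-hH.eigenvalues i ⊔ 0 : ℝ) : ℂ)
        = ((hH.eigenvalues i : ℝ) : ℂ)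
    rw [← Complex.ofReal_sub, max_zero_sub_max_neg_zero_eq_self]
  have hHeq : H = P - Q := by
    conv_lhs => rw [hH.spectral_theorem]
    rw [hPdef, hQdef, ← Matrix.star_eq_conjTranspose U, ← sub_mul, ← mul_sub, hd]
    rfl
  rw [hHeq, map_sub]
  exact ((psd_map Φ hB hs hP).1).sub ((psd_map Φ hB hs hQ).1)

private lemma star_map (hB : ∀ X, (s • Φ (Xᴴ * X) - (Φ X)ᴴ * Φ X).PosSemidef)
    (hs : 0 < s) (A : Matrix (Fin m) (Fin m) ℂ) : Φ Aᴴ = (Φ A)ᴴ := by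
  obtain ⟨H, hHdef⟩ : ∃ H, H = A + Aᴴ := ⟨_, rfl⟩
  obtain ⟨K, hKdef⟩ : ∃ K, K = Complex.I • (Aᴴ - A) := ⟨_, rfl⟩
  have hH : H.IsHermitian := by
    rw [hHdef]; simp [Matrix.IsHermitian, add_comm]
  have hK : K.IsHermitian := by
    rw [hKdef]
    show (Complex.I • (Aᴴ - A))ᴴ = _
    rw [conjTranspose_smul, conjTranspose_sub, conjTranspose_conjTranspose,
      Complex.star_def, Complex.conj_I]
    module
  have h1 := (herm_map Φ hB hs hH).eq
  have h2 := (herm_map Φ hB hs hK).eq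
  have hA : A = (1/2 : ℂ) • (H + Complex.I • K) := by
    rw [hHdef, hKdef, smul_smul, Complex.I_mul_I]
    module
  have hAH : Aᴴ = (1/2 : ℂ) • (H - Complex.I • K) := by
    rw [hHdef, hKdef, smul_smul, Complex.I_mul_I]
    module
  have e1 : Φ Aᴴ = (1/2 : ℂ) • (Φ H - Complex.I • Φ K) := by
    rw [hAH, _root_.map_smul, map_sub, _root_.map_smul]
  have e2 : (Φ A)ᴴ = (1/2 : ℂ) • (Φ H - Complex.I • Φ K) := by
    conv_lhs => rw [hA]
    rw [_root_.map_smul, map_add, _root_.map_smul, conjTranspose_smul, conjTranspose_add,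
      conjTranspose_smul, h1, h2, Complex.star_def, Complex.conj_I]
    norm_num [map_ofNat]
    module
  rw [e1, e2]
private lemma cauchy_step
    (hB : ∀ X, (s • Φ (Xᴴ * X) - (Φ X)ᴴ * Φ X).PosSemidef)
    (hstar : ∀ A, Φ Aᴴ = (Φ A)ᴴ)
    {Y : Matrix (Fin m) (Fin m) ℂ} (h0 : (Φ Y)ᴴ * Φ Y = s • Φ (Yᴴ * Y))
    (Z : Matrix (Fin m) (Fin m) ℂ) :
    (Φ Y)ᴴ * Φ Z = s • Φ (Yᴴ * Z) := by
  set BYZ := s • Φ (Yᴴ * Z) - (Φ Y)ᴴ * Φ Z with hBYZ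
  set BZY := s • Φ (Zᴴ * Y) - (Φ Z)ᴴ * Φ Y with hBZY
  set BZZ := s • Φ (Zᴴ * Z) - (Φ Z)ᴴ * Φ Z with hBZZ
  have hherm : BYZᴴ = BZY := by
    rw [hBYZ, hBZY, conjTranspose_sub, conjTranspose_smul, star_trivial,
      ← hstar (Yᴴ * Z), conjTranspose_mul Yᴴ Z, conjTranspose_conjTranspose,
      conjTranspose_mul, conjTranspose_conjTranspose]
  have h0' : s • Φ (Yᴴ * Y) - (Φ Y)ᴴ * Φ Y = 0 := by rw [h0, sub_self]
  have key : ∀ t : ℂ,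
      s • Φ ((Y + t • Z)ᴴ * (Y + t • Z)) - (Φ (Y + t • Z))ᴴ * Φ (Y + t • Z)
        = (s • Φ (Yᴴ * Y) - (Φ Y)ᴴ * Φ Y)
          + (t • BYZ + (star t) • BZY + (star t * t) • BZZ) := by
    intro t
    simp only [hBYZ, hBZY, hBZZ, conjTranspose_add, conjTranspose_smul, add_mul, mul_add,
      map_add, _root_.map_smul, smul_mul_assoc, mul_smul_comm,
      RCLike.real_smul_eq_coe_smul (K := ℂ)]
    module
  have hpsd : ∀ t : ℂ, (t • BYZ + (star t) • BZY + (star t * t) • BZZ).PosSemidef := by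
    intro t
    have h := hB (Y + t • Z)
    rw [key t, h0', zero_add] at h
    exact h
  have hZZ : BZZ.PosSemidef := hB Z
  have hmain : BYZ = 0 := by
    refine qzero' _ fun x => ?_
    set b := star x ⬝ᵥ (BYZ *ᵥ x) with hb
    set c := star x ⬝ᵥ (BZZ *ᵥ x) with hc
    have hbzy : star x ⬝ᵥ (BZY *ᵥ x) = star b := by rw [← hherm, qconj]
    have hcpos : 0 ≤ c := hZZ.dotProduct_mulVec_nonneg x
    have hC : 0 ≤ c.re ∧ c.im = 0 := by
      have := Complex.le_def.mp hcpos
      exact ⟨this.1, this.2.symm⟩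
    set C := c.re with hCdef
    set N := Complex.normSq b with hN
    set r : ℝ := 1 / (C + 1) with hr
    have hrpos : 0 < r := by
      rw [hr]
      have : 0 < C + 1 := by linarith [hC.1]
      positivity
    have hq := (hpsd (-(r : ℂ) * star b)).dotProduct_mulVec_nonneg x
    have hqval : star x ⬝ᵥ (((-(r : ℂ) * star b) • BYZ + (star (-(r : ℂ) * star b)) • BZY
        + (star (-(r : ℂ) * star b) * (-(r : ℂ) * star b)) • BZZ) *ᵥ x)
        = Complex.ofReal (r ^ 2 * N) * c - Complex.ofReal (2 * r * N) := by
      simp only [add_mulVec, smul_mulVec, dotProduct_add, dotProduct_smul, smul_eq_mul,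
        hbzy, ← hb, ← hc, star_mul', star_star, star_neg, Complex.star_def, Complex.conj_ofReal]
      have h1 : b * (starRingEnd ℂ) b = (N : ℂ) := Complex.mul_conj b
      have h2 : (starRingEnd ℂ) b * b = (N : ℂ) := by rw [mul_comm]; exact h1
      push_cast
      ring_nf
      simp only [Complex.conj_conj]
      linear_combination ((r : ℂ) ^ 2 * c - 2 * (r : ℂ)) * h2
    have hineq : (0 : ℂ) ≤ Complex.ofReal (r ^ 2 * N) * c - Complex.ofReal (2 * r * N) := by
      rw [← hqval]; exact hq
    have hre : (0 : ℝ) ≤ r ^ 2 * N * C - 2 * r * N := by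
      have := (Complex.le_def.mp hineq).1
      simpa [Complex.mul_re, hC.2, ← Complex.ofReal_pow, hCdef] using this
    have hNnn : 0 ≤ N := Complex.normSq_nonneg b
    have hrC : r * C ≤ 1 := by
      rw [hr, div_mul_eq_mul_div, div_le_one (by linarith [hC.1])]
      linarith [hC.1]
    have hrN : r * N ≤ 0 := by
      nlinarith [hre, mul_nonneg (mul_nonneg hrpos.le hNnn) (sub_nonneg.mpr hrC)]
    have hN0 : N = 0 := by nlinarith [hrN, hrpos, hNnn]
    exact Complex.normSq_eq_zero.mp hN0
  rw [hBYZ] at hmain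
  exact (sub_eq_zero.mp hmain).symm


private lemma phi_zero (hB : ∀ X, ((0:ℝ) • Φ (Xᴴ * X) - (Φ X)ᴴ * Φ X).PosSemidef) :
    ∀ X, Φ X = 0 := by
  intro X
  have h := hB X
  rw [zero_smul, zero_sub] at h
  have hpos := posSemidef_conjTranspose_mul_self (Φ X)
  have hz : (Φ X)ᴴ * Φ X = 0 := by
    refine qzero' _ fun x => ?_
    have h1 := h.dotProduct_mulVec_nonneg x
    have h2 := hpos.dotProduct_mulVec_nonneg x
    rw [show (-((Φ X)ᴴ * Φ X)) *ᵥ x = -(((Φ X)ᴴ * Φ X) *ᵥ x) from neg_mulVec _ _,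
      dotProduct_neg] at h1
    exact le_antisymm (neg_nonneg.mp h1) h2
  exact conjTranspose_mul_self_eq_zero.mp hz

end

open Matrix ComplexOrder

/-- **Multiplicative domain of a Schwarz map.** Let `Φ` be a Schwarz map with (least)
Schwarz constant `s = ‖Φ‖_S`, and let `M_Φ = {X : Φ(X) Φ(X*) = s Φ(X X*)}`. Then
`X ∈ M_Φ` iff `Φ(X) Φ(Z) = s Φ(X Z)` for all `Z`; in particular `M_Φ` is a vector
subspace closed under multiplication. -/
theorem schwarz_multiplicative_domain {m k : ℕ}
    (Φ : Matrix (Fin m) (Fin m) ℂ →ₗ[ℂ] Matrix (Fin k) (Fin k) ℂ) (s : ℝ)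
    (hs : IsLeast {c : ℝ | 0 ≤ c ∧
      ∀ X : Matrix (Fin m) (Fin m) ℂ, (c • Φ (Xᴴ * X) - (Φ X)ᴴ * Φ X).PosSemidef} s) :
    (∀ X : Matrix (Fin m) (Fin m) ℂ,
      X ∈ {X : Matrix (Fin m) (Fin m) ℂ | Φ X * Φ Xᴴ = s • Φ (X * Xᴴ)} ↔
        ∀ Z : Matrix (Fin m) (Fin m) ℂ, Φ X * Φ Z = s • Φ (X * Z)) ∧
    (∀ X Y : Matrix (Fin m) (Fin m) ℂ, ∀ a : ℂ,
      X ∈ {X : Matrix (Fin m) (Fin m) ℂ | Φ X * Φ Xᴴ = s • Φ (X * Xᴴ)} →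
      Y ∈ {X : Matrix (Fin m) (Fin m) ℂ | Φ X * Φ Xᴴ = s • Φ (X * Xᴴ)} →
      X + Y ∈ {X : Matrix (Fin m) (Fin m) ℂ | Φ X * Φ Xᴴ = s • Φ (X * Xᴴ)} ∧
      a • X ∈ {X : Matrix (Fin m) (Fin m) ℂ | Φ X * Φ Xᴴ = s • Φ (X * Xᴴ)} ∧
      X * Y ∈ {X : Matrix (Fin m) (Fin m) ℂ | Φ X * Φ Xᴴ = s • Φ (X * Xᴴ)}) := by
  obtain ⟨⟨hs0, hB⟩, -⟩ := hs
  simp only [Set.mem_setOf_eq]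
  rcases eq_or_lt_of_le hs0 with hzero | hpos
  · -- s = 0 : Φ is the zero map and everything is trivial
    have hΦ0 : ∀ X, Φ X = 0 := phi_zero Φ (by rw [hzero]; exact hB)
    constructor
    · intro X
      constructor
      · intro _ Z
        simp [hΦ0]
      · intro _
        simp [hΦ0]
    · intro X Y a _ _
      refine ⟨?_, ?_, ?_⟩ <;> simp [hΦ0]
  · -- s > 0
    have hstar := star_map Φ hB hpos
    have hiff : ∀ X : Matrix (Fin m) (Fin m) ℂ,
        (Φ X * Φ Xᴴ = s • Φ (X * Xᴴ)) ↔ ∀ Z, Φ X * Φ Z = s • Φ (X * Z) := by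
      intro X
      have hXc : (Φ Xᴴ)ᴴ = Φ X := by rw [← hstar, conjTranspose_conjTranspose]
      constructor
      · intro h Z
        have hcs := cauchy_step Φ hB hstar (Y := Xᴴ)
          (by rw [hXc, conjTranspose_conjTranspose]; exact h) Z
        rw [hXc, conjTranspose_conjTranspose] at hcs
        exact hcs
      · intro h
        exact h Xᴴ
    refine ⟨hiff, ?_⟩
    intro X Y a hX hY
    have pX := (hiff X).mp hX
    have pY := (hiff Y).mp hY
    refine ⟨?_, ?_, ?_⟩
    · show Φ (X + Y) * Φ (X + Y)ᴴ = s • Φ ((X + Y) * (X + Y)ᴴ)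
      simp only [conjTranspose_add, map_add, add_mul, mul_add, pX, pY, smul_add]
    · show Φ (a • X) * Φ (a • X)ᴴ = s • Φ ((a • X) * (a • X)ᴴ)
      simp only [conjTranspose_smul, _root_.map_smul, smul_mul_assoc, mul_smul_comm, pX,
        RCLike.real_smul_eq_coe_smul (K := ℂ)]
      module
    · show Φ (X * Y) * Φ (X * Y)ᴴ = s • Φ ((X * Y) * (X * Y)ᴴ)
      have e1 : Φ X * Φ Y = s • Φ (X * Y) := pX Y
      have h2 : Φ X * Φ (Y * (Yᴴ * Xᴴ)) = s • Φ (X * (Y * (Yᴴ * Xᴴ))) := pX _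
      have h3 : Φ Y * Φ (Yᴴ * Xᴴ) = s • Φ (Y * (Yᴴ * Xᴴ)) := pY _
      have key2 : s • (Φ (X * Y) * Φ (Yᴴ * Xᴴ)) = s • (s • Φ ((X * Y) * (Yᴴ * Xᴴ))) := by
        calc s • (Φ (X * Y) * Φ (Yᴴ * Xᴴ)) = (s • Φ (X * Y)) * Φ (Yᴴ * Xᴴ) := by
              rw [smul_mul_assoc]
        _ = (Φ X * Φ Y) * Φ (Yᴴ * Xᴴ) := by rw [← e1]
        _ = Φ X * (Φ Y * Φ (Yᴴ * Xᴴ)) := by rw [mul_assoc]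
        _ = Φ X * (s • Φ (Y * (Yᴴ * Xᴴ))) := by rw [h3]
        _ = s • (Φ X * Φ (Y * (Yᴴ * Xᴴ))) := by rw [mul_smul_comm]
        _ = s • (s • Φ (X * (Y * (Yᴴ * Xᴴ)))) := by rw [h2]
        _ = s • (s • Φ ((X * Y) * (Yᴴ * Xᴴ))) := by rw [mul_assoc]
      have final : Φ (X * Y) * Φ (Yᴴ * Xᴴ) = s • Φ ((X * Y) * (Yᴴ * Xᴴ)) := by
        have := congrArg (fun M => s⁻¹ • M) key2
        simpa [smul_smul, ← mul_assoc, inv_mul_cancel₀ hpos.ne'] using this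
      rw [conjTranspose_mul]
      exact final
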